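/- Let K be a field of characteristic 0 and d ≥ 2 an integer. Let g be the K-algebra automorphism of K[x,y] determined by g(x) = x + y^d and g(y) = y + (x + y^d)^d (this is the composition exp(y^d·∂/∂x) ∘ exp(x^d·∂/∂y)). Set h = g − id as a K-linear endomorphism of K[x,y]. Then for every i ≥ 0 the polynomial hⁱ(x) is nonzero and the minimal total degree of a monomial occurring in hⁱ(x) equals 1 + i(d−1); consequently the smallest g-stable K-subspace of K[x,y] containing x is infinite-dimensional, and g is not a locally finite automorphism. -/

import Mathlib

open MvPolynomial

/-- An algebra automorphism `g` of `A` is locally finite if every `a ∈ A`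
lies in a finite-dimensional `K`-subspace of `A` stable under `g`. -/
def IsLocFinAut {K A : Type*} [Field K] [CommRing A] [Algebra K A]
    (g : A ≃ₐ[K] A) : Prop :=
  ∀ a : A, ∃ V : Submodule K A, a ∈ V ∧ FiniteDimensional K V ∧ ∀ v ∈ V, g v ∈ V

namespace Stmt8Aux

variable {K : Type*} [Field K] [CharZero K]

lemma sum_eq_degree (m : Fin 2 →₀ ℕ) : (m.sum fun _ e => e) = Finsupp.degree m := rfl

lemma degree_add' (a b : Fin 2 →₀ ℕ) :
    Finsupp.degree (a + b) = Finsupp.degree a + Finsupp.degree b := by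
  simp only [Finsupp.degree_eq_weight_one, map_add]

lemma degree_single_one (i : Fin 2) : Finsupp.degree (Finsupp.single i 1) = 1 := by
  rw [Finsupp.degree_apply, Finsupp.support_single_ne_zero _ one_ne_zero, Finset.sum_singleton,
    Finsupp.single_eq_same]

lemma degree_fin2 (m : Fin 2 →₀ ℕ) : Finsupp.degree m = m 0 + m 1 := by
  rw [Finsupp.degree_apply, Finset.sum_subset (Finset.subset_univ _)
    (fun x _ hx => Finsupp.notMem_support_iff.mp hx), Fin.sum_univ_two]

/-- All monomials of `f` have total degree `≥ n`. -/
def MDeg (n : ℕ) (f : MvPolynomial (Fin 2) K) : Prop :=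
  ∀ m : Fin 2 →₀ ℕ, Finsupp.degree m < n → coeff m f = 0

lemma MDeg.mono {n k : ℕ} {f : MvPolynomial (Fin 2) K} (h : MDeg n f) (hk : k ≤ n) : MDeg k f :=
  fun m hm => h m (lt_of_lt_of_le hm hk)

lemma MDeg.add {n : ℕ} {f g : MvPolynomial (Fin 2) K} (hf : MDeg n f) (hg : MDeg n g) :
    MDeg n (f + g) := by
  intro m hm; rw [coeff_add, hf m hm, hg m hm, add_zero]

lemma MDeg.sum {ι : Type*} {s : Finset ι} {f : ι → MvPolynomial (Fin 2) K} {n : ℕ}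
    (h : ∀ i ∈ s, MDeg n (f i)) : MDeg n (∑ i ∈ s, f i) := by
  intro m hm
  rw [coeff_sum]
  exact Finset.sum_eq_zero fun i hi => h i hi m hm

lemma MDeg.mul {n p : ℕ} {f g : MvPolynomial (Fin 2) K} (hf : MDeg n f) (hg : MDeg p g) :
    MDeg (n + p) (f * g) := by
  intro m hm
  classical
  rw [coeff_mul]
  apply Finset.sum_eq_zero
  rintro ⟨a, b⟩ hab
  rw [Finset.HasAntidiagonal.mem_antidiagonal] at hab
  have hdeg : Finsupp.degree a + Finsupp.degree b < n + p := by
    rw [← degree_add', hab]; exact hm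
  rcases lt_or_ge (Finsupp.degree a) n with hc | hc
  · rw [hf a hc, zero_mul]
  · rw [hg b (by omega), mul_zero]

lemma mdeg_of_isHomogeneous {f : MvPolynomial (Fin 2) K} {n : ℕ} (hf : IsHomogeneous f n) :
    MDeg n f :=
  fun _ hm => hf.coeff_eq_zero (by omega)

lemma degree_support_eq {f : MvPolynomial (Fin 2) K} {n : ℕ} (hf : IsHomogeneous f n)
    {m : Fin 2 →₀ ℕ} (hm : m ∈ f.support) : Finsupp.degree m = n := by
  by_contra hne
  exact (mem_support_iff.mp hm) (hf.coeff_eq_zero hne)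

lemma isHomogeneous_pderiv {f : MvPolynomial (Fin 2) K} {n : ℕ} (hf : IsHomogeneous f n)
    (i : Fin 2) : IsHomogeneous (pderiv i f) (n - 1) := by
  have hrw : pderiv i f = ∑ m ∈ f.support, pderiv i (monomial m (coeff m f)) := by
    conv_lhs => rw [as_sum f]
    exact map_sum (pderiv i).toLinearMap _ _
  rw [hrw]
  apply IsHomogeneous.sum
  intro m hm
  rw [pderiv_monomial]
  by_cases h0 : m i = 0
  · rw [h0]
    simpa using isHomogeneous_zero (Fin 2) K (n - 1)
  · apply isHomogeneous_monomial
    have h1 : m - Finsupp.single i 1 + Finsupp.single i 1 = m := by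
      ext j
      rcases eq_or_ne j i with rfl | hne
      · simp only [Finsupp.add_apply, Finsupp.tsub_apply, Finsupp.single_eq_same]
        omega
      · simp [Finsupp.single_apply, Ne.symm hne]
    have h2 := degree_add' (m - Finsupp.single i 1) (Finsupp.single i 1)
    rw [h1, degree_single_one] at h2
    have h3 := degree_support_eq hf hm
    omega

section D

variable (d : ℕ)

noncomputable def Dop : MvPolynomial (Fin 2) K →ₗ[K] MvPolynomial (Fin 2) K :=
  LinearMap.mulLeft K (X 1 ^ d) ∘ₗ (pderiv (0 : Fin 2)).toLinearMap
    + LinearMap.mulLeft K (X 0 ^ d) ∘ₗ (pderiv (1 : Fin 2)).toLinearMap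

lemma Dop_apply (f : MvPolynomial (Fin 2) K) :
    Dop d f = X 1 ^ d * pderiv 0 f + X 0 ^ d * pderiv 1 f := rfl

lemma Dop_mul (u v : MvPolynomial (Fin 2) K) :
    Dop d (u * v) = Dop d u * v + u * Dop d v := by
  simp only [Dop_apply, pderiv_mul]; ring

lemma isHomogeneous_Dop {f : MvPolynomial (Fin 2) K} {n : ℕ} (hf : IsHomogeneous f n)
    (hn : 1 ≤ n) : IsHomogeneous (Dop d f) (n + d - 1) := by
  rw [Dop_apply]
  have e : n + d - 1 = d + (n - 1) := by omega
  rw [e]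
  exact ((isHomogeneous_X_pow _ _).mul (isHomogeneous_pderiv hf 0)).add
    ((isHomogeneous_X_pow _ _).mul (isHomogeneous_pderiv hf 1))

lemma mdeg_Dop {f : MvPolynomial (Fin 2) K} {n : ℕ} (hd1 : 1 ≤ d) (hf : IsHomogeneous f n) :
    MDeg (n + (d - 1)) (Dop d f) := by
  rw [Dop_apply]
  have h1 : MDeg (d + (n - 1)) (X 1 ^ d * pderiv 0 f : MvPolynomial (Fin 2) K) :=
    (mdeg_of_isHomogeneous (isHomogeneous_X_pow _ _)).mul
      (mdeg_of_isHomogeneous (isHomogeneous_pderiv hf 0))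
  have h2 : MDeg (d + (n - 1)) (X 0 ^ d * pderiv 1 f : MvPolynomial (Fin 2) K) :=
    (mdeg_of_isHomogeneous (isHomogeneous_X_pow _ _)).mul
      (mdeg_of_isHomogeneous (isHomogeneous_pderiv hf 1))
  exact (h1.mono (by omega)).add (h2.mono (by omega))

lemma eval_one_pderiv_sum {p : MvPolynomial (Fin 2) K} {n : ℕ} (hp : IsHomogeneous p n) :
    eval (fun _ => (1 : K)) (pderiv 0 p) + eval (fun _ => (1 : K)) (pderiv 1 p)
      = (n : K) * eval (fun _ => (1 : K)) p := by
  have h0 : ∀ i : Fin 2, eval (fun _ => (1 : K)) (pderiv i p)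
      = ∑ m ∈ p.support, coeff m p * (m i : K) := by
    intro i
    have hrw : pderiv i p = ∑ m ∈ p.support, pderiv i (monomial m (coeff m p)) := by
      conv_lhs => rw [as_sum p]
      exact map_sum (pderiv i).toLinearMap _ _
    rw [hrw, map_sum]
    apply Finset.sum_congr rfl
    intro m _
    rw [pderiv_monomial, eval_monomial]
    simp [Finsupp.prod]
  have h1 : eval (fun _ => (1 : K)) p = ∑ m ∈ p.support, coeff m p := by
    conv_lhs => rw [as_sum p]
    rw [map_sum]
    apply Finset.sum_congr rfl
    intro m _
    rw [eval_monomial]; simp [Finsupp.prod]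
  rw [h0, h0, h1, ← Finset.sum_add_distrib, Finset.mul_sum]
  apply Finset.sum_congr rfl
  intro m hm
  have hd2 : m 0 + m 1 = n := by
    have := degree_support_eq hp hm
    rwa [degree_fin2] at this
  have hcast : ((m 0 : K) + (m 1 : K)) = (n : K) := by exact_mod_cast congrArg Nat.cast hd2
  calc coeff m p * (m 0 : K) + coeff m p * (m 1 : K)
      = coeff m p * ((m 0 : K) + (m 1 : K)) := by ring
    _ = (n : K) * coeff m p := by rw [hcast]; ring

end D

section G

variable (g : MvPolynomial (Fin 2) K ≃ₐ[K] MvPolynomial (Fin 2) K) (d : ℕ)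

noncomputable def RemL : MvPolynomial (Fin 2) K →ₗ[K] MvPolynomial (Fin 2) K :=
  g.toLinearMap - LinearMap.id - Dop d

lemma RemL_apply (f : MvPolynomial (Fin 2) K) : RemL g d f = g f - f - Dop d f := rfl

/-- `u` is homogeneous of degree `n` and its remainder has min-degree `≥ n + d`. -/
def Good (u : MvPolynomial (Fin 2) K) (n : ℕ) : Prop :=
  IsHomogeneous u n ∧ MDeg (n + d) (RemL g d u)

lemma good_C (c : K) : Good g d (C c) 0 := by
  constructor
  · exact isHomogeneous_C _ _
  · have hz : RemL g d (C c) = 0 := by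
      rw [RemL_apply]
      have hg : g (C c) = C c := by
        rw [← MvPolynomial.algebraMap_eq]; exact g.commutes c
      rw [hg, Dop_apply]
      simp [pderiv_C]
    rw [hz]; intro m _; simp

lemma good_one : Good g d 1 0 := by
  have := good_C g d 1
  rwa [map_one] at this

lemma good_X0 (hgx : g (X 0) = X 0 + X 1 ^ d) : Good g d (X 0) 1 := by
  refine ⟨isHomogeneous_X _ _, ?_⟩
  have hz : RemL g d (X 0) = 0 := by
    rw [RemL_apply, hgx, Dop_apply]
    rw [pderiv_X_self, pderiv_X_of_ne (show (0 : Fin 2) ≠ 1 by decide)]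
    ring
  rw [hz]; intro m _; simp

lemma good_X1 (hd : 2 ≤ d) (hgy : g (X 1) = X 1 + (X 0 + X 1 ^ d) ^ d) : Good g d (X 1) 1 := by
  refine ⟨isHomogeneous_X _ _, ?_⟩
  have hre : RemL g d (X 1) = (X 0 + X 1 ^ d) ^ d - X 0 ^ d := by
    rw [RemL_apply, hgy, Dop_apply]
    rw [pderiv_X_self, pderiv_X_of_ne (show (1 : Fin 2) ≠ 0 by decide)]
    ring
  rw [hre, add_pow, Finset.sum_range_succ]
  simp only [Nat.sub_self, pow_zero, mul_one, Nat.choose_self, Nat.cast_one]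
  rw [add_sub_cancel_right]
  apply MDeg.sum
  intro k hk
  rw [Finset.mem_range] at hk
  have hterm : MDeg (k + d * (d - k) + 0)
      ((X 0 : MvPolynomial (Fin 2) K) ^ k * (X 1 ^ d) ^ (d - k) * (Nat.choose d k : MvPolynomial (Fin 2) K)) :=
    ((mdeg_of_isHomogeneous (isHomogeneous_X_pow _ _)).mul
      (mdeg_of_isHomogeneous ((isHomogeneous_X_pow (1 : Fin 2) d).pow (d - k)))).mul
      (fun m hm => absurd hm (Nat.not_lt_zero _))
  apply hterm.mono
  rcases Nat.eq_zero_or_pos k with rfl | hkpos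
  · have h2 : 2 * d ≤ d * d := Nat.mul_le_mul_right d hd
    simpa using by omega
  · have h2 : d ≤ d * (d - k) := Nat.le_mul_of_pos_right d (by omega)
    omega

lemma Good.mul {u v : MvPolynomial (Fin 2) K} {n p : ℕ} (hd : 2 ≤ d)
    (hu : Good g d u n) (hv : Good g d v p) : Good g d (u * v) (n + p) := by
  obtain ⟨hu1, hu2⟩ := hu; obtain ⟨hv1, hv2⟩ := hv
  refine ⟨hu1.mul hv1, ?_⟩
  have hgu : g u = u + Dop d u + RemL g d u := by rw [RemL_apply]; ring
  have hgv : g v = v + Dop d v + RemL g d v := by rw [RemL_apply]; ring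
  have key : RemL g d (u * v)
      = u * RemL g d v + Dop d u * Dop d v + Dop d u * RemL g d v
        + RemL g d u * v + RemL g d u * Dop d v + RemL g d u * RemL g d v := by
    rw [RemL_apply, map_mul, hgu, hgv, Dop_mul]; ring
  rw [key]
  have hDu := mdeg_Dop d (by omega) hu1
  have hDv := mdeg_Dop d (by omega) hv1
  exact ((((((mdeg_of_isHomogeneous hu1).mul hv2).mono (by omega)).add
    ((hDu.mul hDv).mono (by omega))).add
    ((hDu.mul hv2).mono (by omega))).add
    ((hu2.mul (mdeg_of_isHomogeneous hv1)).mono (by omega))).add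
    ((hu2.mul hDv).mono (by omega)) |>.add
    ((hu2.mul hv2).mono (by omega))

lemma good_X (hd : 2 ≤ d) (hgx : g (X 0) = X 0 + X 1 ^ d)
    (hgy : g (X 1) = X 1 + (X 0 + X 1 ^ d) ^ d) (i : Fin 2) : Good g d (X i) 1 := by
  fin_cases i
  · exact good_X0 g d hgx
  · exact good_X1 g d hd hgy

lemma good_X_pow (hd : 2 ≤ d) (hgx : g (X 0) = X 0 + X 1 ^ d)
    (hgy : g (X 1) = X 1 + (X 0 + X 1 ^ d) ^ d) (i : Fin 2) (a : ℕ) :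
    Good g d (X i ^ a) a := by
  induction a with
  | zero => simpa using good_one g d
  | succ a ih =>
    rw [pow_succ]
    exact Good.mul g d hd ih (good_X g d hd hgx hgy i)

lemma good_monomial (hd : 2 ≤ d) (hgx : g (X 0) = X 0 + X 1 ^ d)
    (hgy : g (X 1) = X 1 + (X 0 + X 1 ^ d) ^ d) (m : Fin 2 →₀ ℕ) (c : K) :
    Good g d (monomial m c) (Finsupp.degree m) := by
  have hm' : Finsupp.single (0 : Fin 2) (m 0) + Finsupp.single (1 : Fin 2) (m 1) = m := by
    ext j
    fin_cases j <;> simp [Finsupp.single_apply]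
  have heq : (monomial m c : MvPolynomial (Fin 2) K)
      = C c * (X 0 ^ (m 0) * X 1 ^ (m 1)) := by
    rw [X_pow_eq_monomial, X_pow_eq_monomial, monomial_mul, one_mul, C_mul_monomial, mul_one, hm']
  have hgd := Good.mul g d hd (good_C g d c)
    (Good.mul g d hd (good_X_pow g d hd hgx hgy 0 (m 0)) (good_X_pow g d hd hgx hgy 1 (m 1)))
  rw [← heq] at hgd
  have h2 : 0 + (m 0 + m 1) = Finsupp.degree m := by rw [degree_fin2]; omega
  rwa [h2] at hgd

lemma mdeg_RemL_of_isHomogeneous (hd : 2 ≤ d) (hgx : g (X 0) = X 0 + X 1 ^ d)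
    (hgy : g (X 1) = X 1 + (X 0 + X 1 ^ d) ^ d) {p : MvPolynomial (Fin 2) K} {n : ℕ}
    (hp : IsHomogeneous p n) : MDeg (n + d) (RemL g d p) := by
  have hrw : RemL g d p = ∑ m ∈ p.support, RemL g d (monomial m (coeff m p)) := by
    conv_lhs => rw [as_sum p]
    exact map_sum _ _ _
  rw [hrw]
  apply MDeg.sum
  intro m hm
  have := (good_monomial g d hd hgx hgy m (coeff m p)).2
  rwa [degree_support_eq hp hm] at this

lemma mdeg_RemL_of_mdeg (hd : 2 ≤ d) (hgx : g (X 0) = X 0 + X 1 ^ d)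
    (hgy : g (X 1) = X 1 + (X 0 + X 1 ^ d) ^ d) {r : MvPolynomial (Fin 2) K} {k : ℕ}
    (hr : MDeg k r) : MDeg (k + d) (RemL g d r) := by
  have hrw : RemL g d r = ∑ m ∈ r.support, RemL g d (monomial m (coeff m r)) := by
    conv_lhs => rw [as_sum r]
    exact map_sum _ _ _
  rw [hrw]
  apply MDeg.sum
  intro m hm
  have hge : k ≤ Finsupp.degree m := by
    by_contra hlt
    exact (mem_support_iff.mp hm) (hr m (by omega))
  exact ((good_monomial g d hd hgx hgy m (coeff m r)).2).mono (by omega)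

lemma mdeg_Dop_of_mdeg (hd1 : 1 ≤ d) {r : MvPolynomial (Fin 2) K} {k : ℕ}
    (hr : MDeg k r) : MDeg (k + (d - 1)) (Dop d r) := by
  have hrw : Dop d r = ∑ m ∈ r.support, Dop d (monomial m (coeff m r)) := by
    conv_lhs => rw [as_sum r]
    exact map_sum _ _ _
  rw [hrw]
  apply MDeg.sum
  intro m hm
  have hge : k ≤ Finsupp.degree m := by
    by_contra hlt
    exact (mem_support_iff.mp hm) (hr m (by omega))
  exact (mdeg_Dop d hd1 (isHomogeneous_monomial _ rfl)).mono (by omega)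

end G

end Stmt8Aux

open Stmt8Aux in
/-- Let `g` be the automorphism of `K[x,y]` with `g x = x + yᵈ` and
`g y = y + (x + yᵈ)ᵈ` (i.e. `g = exp(yᵈ∂/∂x) ∘ exp(xᵈ∂/∂y)`), `d ≥ 2`, and
set `h = g - id` (a `K`-linear endomorphism).  Then `hⁱ x` is nonzero with
minimal total degree of a monomial equal to `1 + i(d-1)`; consequently the
smallest `g`-stable subspace containing `x` is infinite-dimensional and `g`
is not locally finite. -/
theorem stmt8 {K : Type*} [Field K] [CharZero K] (d : ℕ) (hd : 2 ≤ d)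
    (g : MvPolynomial (Fin 2) K ≃ₐ[K] MvPolynomial (Fin 2) K)
    (hgx : g (X 0) = X 0 + X 1 ^ d)
    (hgy : g (X 1) = X 1 + (X 0 + X 1 ^ d) ^ d) :
    let h : MvPolynomial (Fin 2) K →ₗ[K] MvPolynomial (Fin 2) K :=
      g.toLinearMap - LinearMap.id
    (∀ i : ℕ, (h ^ i) (X 0) ≠ 0 ∧
      (∃ m : Fin 2 →₀ ℕ, (m.sum fun _ e => e) = 1 + i * (d - 1) ∧
        coeff m ((h ^ i) (X 0)) ≠ 0) ∧
      (∀ m : Fin 2 →₀ ℕ, (m.sum fun _ e => e) < 1 + i * (d - 1) →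
        coeff m ((h ^ i) (X 0)) = 0)) ∧
    (∀ V : Submodule K (MvPolynomial (Fin 2) K), X 0 ∈ V →
      (∀ v ∈ V, g v ∈ V) → ¬ FiniteDimensional K V) ∧
    ¬ IsLocFinAut g := by
  intro h
  have hrfl : ∀ f, h f = g f - f := fun f => rfl
  -- the main invariant
  have inv : ∀ i : ℕ, ∃ (p r : MvPolynomial (Fin 2) K) (c : ℕ), 0 < c ∧
      IsHomogeneous p (1 + i * (d - 1)) ∧ eval (fun _ => (1 : K)) p = (c : K) ∧
      MDeg (1 + i * (d - 1) + 1) r ∧ (h ^ i) (X 0) = p + r := by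
    intro i
    induction i with
    | zero =>
      refine ⟨X 0, 0, 1, one_pos, ?_, by simp, fun m hm => by simp, by simp⟩
      simpa using isHomogeneous_X K (0 : Fin 2)
    | succ i IH =>
      obtain ⟨p, r, c, hc, hp, he, hr, heq⟩ := IH
      have hN1 : 1 ≤ 1 + i * (d - 1) := Nat.le_add_right 1 _
      have hmul : (i + 1) * (d - 1) = i * (d - 1) + (d - 1) := by ring
      have e1 : 1 + i * (d - 1) + d - 1 = 1 + (i + 1) * (d - 1) := by
        rw [hmul]; generalize i * (d - 1) = t; omega
      have e2 : 1 + (i + 1) * (d - 1) + 1 = 1 + i * (d - 1) + d := by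
        rw [hmul]; generalize i * (d - 1) = t; omega
      refine ⟨Dop d p, RemL g d p + (g r - r), (1 + i * (d - 1)) * c,
        Nat.mul_pos (by omega) hc, ?_, ?_, ?_, ?_⟩
      · exact e1 ▸ isHomogeneous_Dop d hp hN1
      · have hev : eval (fun _ => (1 : K)) (Dop d p)
            = ((1 + i * (d - 1) : ℕ) : K) * eval (fun _ => (1 : K)) p := by
          rw [Dop_apply]
          simp only [map_add, map_mul, map_pow, eval_X, one_pow, one_mul]
          exact eval_one_pderiv_sum hp
        rw [hev, he]; push_cast; ring
      · rw [e2]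
        apply MDeg.add
        · exact mdeg_RemL_of_isHomogeneous g d hd hgx hgy hp
        · have hx2 := mdeg_Dop_of_mdeg d (by omega) hr
          have hy2 := mdeg_RemL_of_mdeg g d hd hgx hgy hr
          have hsplit : g r - r = Dop d r + RemL g d r := by rw [RemL_apply]; ring
          rw [hsplit]
          exact (hx2.mono (by omega)).add (hy2.mono (by omega))
      · rw [pow_succ', Module.End.mul_apply, heq, hrfl, map_add]
        have hgp : g p = p + Dop d p + RemL g d p := by rw [RemL_apply]; ring
        rw [hgp]; ring
  -- part 1
  have part1 : ∀ i : ℕ, (h ^ i) (X 0) ≠ 0 ∧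
      (∃ m : Fin 2 →₀ ℕ, (m.sum fun _ e => e) = 1 + i * (d - 1) ∧
        coeff m ((h ^ i) (X 0)) ≠ 0) ∧
      (∀ m : Fin 2 →₀ ℕ, (m.sum fun _ e => e) < 1 + i * (d - 1) →
        coeff m ((h ^ i) (X 0)) = 0) := by
    intro i
    obtain ⟨p, r, c, hc, hp, he, hr, heq⟩ := inv i
    have hpne : p ≠ 0 := by
      intro h0
      rw [h0, map_zero] at he
      exact hc.ne' (Nat.cast_eq_zero.mp he.symm)
    obtain ⟨m0, hm0⟩ := MvPolynomial.ne_zero_iff.mp hpne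
    have hdeg : Finsupp.degree m0 = 1 + i * (d - 1) := by
      by_contra hne; exact hm0 (hp.coeff_eq_zero hne)
    have hco : coeff m0 ((h ^ i) (X 0)) = coeff m0 p := by
      rw [heq, coeff_add, hr m0 (by omega), add_zero]
    refine ⟨?_, ⟨m0, ?_, ?_⟩, ?_⟩
    · intro h0; rw [h0, coeff_zero] at hco; exact hm0 hco.symm
    · rw [sum_eq_degree]; exact hdeg
    · rw [hco]; exact hm0
    · intro m hm
      rw [sum_eq_degree] at hm
      rw [heq, coeff_add, hp.coeff_eq_zero (by omega), hr m (by omega), add_zero]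
  -- part 2
  have part2 : ∀ V : Submodule K (MvPolynomial (Fin 2) K), X 0 ∈ V →
      (∀ v ∈ V, g v ∈ V) → ¬ FiniteDimensional K V := by
    intro V hxV hst hfin
    have hmem : ∀ i : ℕ, (h ^ i) (X 0) ∈ V := by
      intro i
      induction i with
      | zero => simpa using hxV
      | succ i IH =>
        rw [pow_succ', Module.End.mul_apply, hrfl]
        exact sub_mem (hst _ IH) IH
    have hli : LinearIndependent K (fun i : ℕ => ((h ^ i) (X 0) : MvPolynomial (Fin 2) K)) := by
      rw [linearIndependent_iff']
      intro s a hsum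
      suffices H : ∀ i, i ∈ s → a i = 0 from H
      intro i
      induction i using Nat.strong_induction_on with
      | _ i IH =>
      intro his
      obtain ⟨-, ⟨m0, hm0deg, hm0ne⟩, -⟩ := part1 i
      have hc0 : ∑ j ∈ s, a j * coeff m0 ((h ^ j) (X 0)) = 0 := by
        have hcg := congrArg (coeff m0) hsum
        rw [coeff_zero, coeff_sum] at hcg
        simpa [coeff_smul, smul_eq_mul] using hcg
      rw [Finset.sum_eq_single i (fun j hjs hji => ?_) (fun hnot => absurd his hnot)] at hc0
      · exact (mul_eq_zero.mp hc0).resolve_right hm0ne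
      · rcases lt_or_gt_of_ne hji with hlt | hgt
        · rw [IH j hlt hjs, zero_mul]
        · obtain ⟨-, -, hlowj⟩ := part1 j
          rw [hlowj m0 ?_, mul_zero]
          rw [hm0deg]
          have h4 : (i + 1) * (d - 1) ≤ j * (d - 1) := Nat.mul_le_mul_right _ hgt
          have h5 : (i + 1) * (d - 1) = i * (d - 1) + (d - 1) := by ring
          rw [h5] at h4
          have h6 : 0 < d - 1 := by omega
          exact Nat.add_lt_add_left (lt_of_lt_of_le (Nat.lt_add_of_pos_right h6) h4) 1
    have hliV : LinearIndependent K (fun i : ℕ => (⟨(h ^ i) (X 0), hmem i⟩ : V)) := by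
      apply LinearIndependent.of_comp V.subtype
      exact hli
    haveI := hfin
    haveI : Finite ℕ := hliV.finite
    exact not_finite ℕ
  refine ⟨part1, part2, ?_⟩
  intro hlf
  obtain ⟨V, hx, hfin, hst⟩ := hlf (X 0)
  exact part2 V hx hst hfin
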